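/- Cauchy residue formula for the projection [·]₊: for every f ∈ F(q), one has [f]₊ = −Res_{w=0}( f̃(w)/(w−q) dw ) − Res_{w=∞}( f̃(w)/(w−q) dw ), where f̃(w) ∈ F(q)(w) is the image of f under the F-algebra embedding F(q) → F(q)(w) sending q to w, the residues are taken in the variable w over the coefficient field F(q) (Res_{w=0}(h dw) is the coefficient of w⁻¹ in the Laurent expansion of h at w = 0, and Res_{w=∞}(h dw) := −Res_{w=0}(w⁻² h(w⁻¹) dw)), and the equality holds in F(q). -/

import Mathlib

open Polynomial in
theorem algebraMap_ratFunc_eq_aeval (F : Type*) [Field F] (p : F[X]) :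
    algebraMap F[X] (RatFunc F) p = Polynomial.aeval RatFunc.X p := by
  have h : (IsScalarTower.toAlgHom F F[X] (RatFunc F)) = Polynomial.aeval (RatFunc.X (K := F)) :=
    Polynomial.algHom_ext (by simp [RatFunc.algebraMap_X])
  exact DFunLike.congr_fun h p

open Polynomial in
/-- Injectivity of `aeval X⁻¹ : F[X] → F(q)`. -/
theorem aeval_inv_injective (F : Type*) [Field F] :
    Function.Injective (Polynomial.aeval (RatFunc.X (K := F))⁻¹ : F[X] →ₐ[F] RatFunc F) := by
  rw [injective_iff_map_eq_zero]
  intro p hp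
  haveI : Invertible (RatFunc.X (K := F))⁻¹ :=
    invertibleOfNonzero (inv_ne_zero RatFunc.X_ne_zero)
  have h2 : (⅟(RatFunc.X (K := F))⁻¹) = RatFunc.X := by
    rw [invOf_eq_inv, inv_inv]
  have hp' : Polynomial.eval₂ (algebraMap F (RatFunc F)) (RatFunc.X)⁻¹ p = 0 := by
    rwa [Polynomial.aeval_def] at hp
  rw [← Polynomial.eval₂_reverse_eq_zero_iff (algebraMap F (RatFunc F)) (RatFunc.X)⁻¹ p] at hp'
  rw [h2] at hp'
  have h3 : algebraMap F[X] (RatFunc F) p.reverse = 0 := by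
    rw [algebraMap_ratFunc_eq_aeval, Polynomial.aeval_def]
    exact hp'
  have h4 : p.reverse = 0 := RatFunc.algebraMap_injective F (by simpa using h3)
  exact Polynomial.reverse_eq_zero.mp h4

noncomputable section

open scoped TensorProduct

variable (F : Type*) [Field F]

/-- The automorphism `q ↦ q⁻¹` of `F(q)`: the unique `F`-algebra map sending `q` to `q⁻¹`. -/
def qinv : RatFunc F →ₐ[F] RatFunc F :=
  IsFractionRing.liftAlgHom (aeval_inv_injective F)

/-- Coefficient of `qⁿ` in the Laurent-series expansion at `q = 0`, as an `F`-linear map. -/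
def coeffL (n : ℤ) : RatFunc F →ₗ[F] F where
  toFun h := ((h : LaurentSeries F)).coeff n
  map_add' a b := by
    rw [map_add, HahnSeries.coeff_add]
  map_smul' c a := by
    rw [Algebra.smul_def, map_mul, RatFunc.algebraMap_eq_C, ← RatFunc.algebraMap_C]
    erw [← RatFunc.coe_coe]
    rw [Polynomial.coe_C, PowerSeries.coe_C, HahnSeries.C_mul_eq_smul, HahnSeries.coeff_smul,
      RingHom.id_apply]

/-- `Res_{q=0} (h dq)`: the coefficient of `q⁻¹` in the Laurent expansion of `h` at `q = 0`. -/
def res0 (h : RatFunc F) : F := coeffL F (-1) h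

/-- `Res_{q=∞} (h dq) := −Res_{q=0} (q⁻² h(q⁻¹) dq)`. -/
def resInf (h : RatFunc F) : F := - res0 F ((RatFunc.X)⁻¹ ^ 2 * qinv F h)

variable (V : Type*) [AddCommGroup V] [Module F V]

/-- The loop space `K := F(q) ⊗_F V` of `V`-valued rational functions. -/
abbrev LoopK := RatFunc F ⊗[F] V

/-- `f(q) ↦ f(q⁻¹)` on `K`. -/
def finv : LoopK F V →ₗ[F] LoopK F V := LinearMap.rTensor V (qinv F).toLinearMap

/-- The `V`-valued coefficient of `qⁿ` in the expansion at `q = 0` of an element of `K`. -/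
def vcoeff (n : ℤ) : LoopK F V →ₗ[F] V :=
  (TensorProduct.lid F V).toLinearMap ∘ₗ LinearMap.rTensor V (coeffL F n)

/-- The loop-space form
`Ω(f,g) = −Res_{q=0}(q⁻¹ B_q(f(q⁻¹),g(q)) dq) − Res_{q=∞}(q⁻¹ B_q(f(q⁻¹),g(q)) dq)`. -/
def Omega (B : LinearMap.BilinForm F V) (f g : LoopK F V) : F :=
  - res0 F ((RatFunc.X)⁻¹ * (LinearMap.BilinForm.baseChange (RatFunc F) B) (finv F V f) g)
  - resInf F ((RatFunc.X)⁻¹ * (LinearMap.BilinForm.baseChange (RatFunc F) B) (finv F V f) g)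

/-- `K₊`: `V`-valued Laurent polynomials in `q`. -/
def Kplus : Submodule F (LoopK F V) :=
  Submodule.span F {z : LoopK F V | ∃ (n : ℤ) (v : V), z = (RatFunc.X ^ n) ⊗ₜ[F] v}

/-- `K₋`: `V`-valued rational functions regular at `q = 0` and vanishing at `q = ∞`. -/
def Kminus : Submodule F (LoopK F V) where
  carrier := {f | (∀ n : ℤ, n < 0 → vcoeff F V n f = 0) ∧
    (∀ n : ℤ, n ≤ 0 → vcoeff F V n (finv F V f) = 0)}
  add_mem' := by
    rintro a b ⟨ha1, ha2⟩ ⟨hb1, hb2⟩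
    constructor
    · intro n hn; rw [map_add, ha1 n hn, hb1 n hn, add_zero]
    · intro n hn; rw [map_add, map_add, ha2 n hn, hb2 n hn, add_zero]
  zero_mem' := by
    constructor <;> intro n hn <;> simp
  smul_mem' := by
    rintro c a ⟨ha1, ha2⟩
    constructor
    · intro n hn; rw [map_smul, ha1 n hn, smul_zero]
    · intro n hn; rw [map_smul, map_smul, ha2 n hn, smul_zero]

/-- The value at `q = 1` of a `V`-valued Laurent polynomial (the sum of its coefficients). -/
def evalOne (f : LoopK F V) : V := ∑ᶠ n : ℤ, vcoeff F V n f

/-- Scalar `K₊ ⊂ F(q)`: the Laurent polynomials. -/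
def KplusS : Submodule F (RatFunc F) :=
  Submodule.span F (Set.range fun n : ℤ => (RatFunc.X : RatFunc F) ^ n)

/-- Scalar `K₋ ⊂ F(q)`: rational functions regular at `q = 0` and vanishing at `q = ∞`. -/
def KminusS : Submodule F (RatFunc F) where
  carrier := {h | (∀ n : ℤ, n < 0 → coeffL F n h = 0) ∧
    (∀ n : ℤ, n ≤ 0 → coeffL F n (qinv F h) = 0)}
  add_mem' := by
    rintro a b ⟨ha1, ha2⟩ ⟨hb1, hb2⟩
    constructor
    · intro n hn; rw [map_add, ha1 n hn, hb1 n hn, add_zero]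
    · intro n hn; rw [map_add, map_add, ha2 n hn, hb2 n hn, add_zero]
  zero_mem' := by
    constructor <;> intro n hn <;> simp
  smul_mem' := by
    rintro c a ⟨ha1, ha2⟩
    constructor
    · intro n hn; rw [map_smul, ha1 n hn, smul_zero]
    · intro n hn; rw [map_smul, map_smul, ha2 n hn, smul_zero]

/-- The embedding `F(q) → F(q)(w)`, `q ↦ w`, on the level of polynomials. -/
def gmap : Polynomial F →+* RatFunc (RatFunc F) :=
  (algebraMap (Polynomial (RatFunc F)) (RatFunc (RatFunc F))).comp
    (Polynomial.mapRingHom (algebraMap F (RatFunc F)))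

theorem gmap_injective : Function.Injective (gmap F) :=
  (RatFunc.algebraMap_injective (RatFunc F)).comp
    (Polynomial.map_injective _ (algebraMap F (RatFunc F)).injective)

/-- The `F`-algebra embedding `F(q) → F(q)(w)` sending `q` to the new variable `w`. -/
def ftilde : RatFunc F →+* RatFunc (RatFunc F) :=
  IsFractionRing.lift (gmap_injective F)

/-! ### Auxiliary lemmas for the residue formula -/

section ResidueAux

open HahnSeries

lemma coeff_ofPowerSeries_neg' {K : Type*} [Semiring K] (φ : PowerSeries K) {n : ℤ}
    (hn : n < 0) : (HahnSeries.ofPowerSeries ℤ K φ).coeff n = 0 := by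
  rw [HahnSeries.ofPowerSeries_apply]
  apply HahnSeries.embDomain_notin_range
  rintro ⟨m, hm⟩
  have hm : ((m : ℕ) : ℤ) = n := hm
  omega

lemma single_one_nat_pow' {K : Type*} [Field K] (m : ℕ) :
    (HahnSeries.single (1 : ℤ) (1 : K)) ^ m = HahnSeries.single (m : ℤ) 1 := by
  induction m with
  | zero => simp [← HahnSeries.single_zero_one]
  | succ k ih =>
      rw [pow_succ, ih, HahnSeries.single_mul_single, one_mul]
      norm_num

lemma single_one_zpow' {K : Type*} [Field K] (n : ℤ) :
    (HahnSeries.single (1 : ℤ) (1 : K)) ^ n = HahnSeries.single n 1 := by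
  obtain ⟨m, rfl | rfl⟩ := Int.eq_nat_or_neg n
  · rw [zpow_natCast, single_one_nat_pow']
  · rw [zpow_neg, zpow_natCast, single_one_nat_pow']
    refine inv_eq_of_mul_eq_one_left ?_
    rw [HahnSeries.single_mul_single, one_mul]
    simp [← HahnSeries.single_zero_one]

lemma coe_X_zpow' {K : Type*} [Field K] (n : ℤ) :
    ((RatFunc.X ^ n : RatFunc K) : LaurentSeries K) = HahnSeries.single n 1 := by
  rw [map_zpow₀, RatFunc.coe_X, single_one_zpow']

lemma ratFunc_coe_C' {K : Type*} [Field K] (c : K) :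
    ((RatFunc.C c : RatFunc K) : LaurentSeries K) = HahnSeries.C c := by
  rw [← RatFunc.algebraMap_C]
  erw [← RatFunc.coe_coe]
  rw [Polynomial.coe_C, PowerSeries.coe_C]

lemma X_sub_C_ne_zero' {K : Type*} [Field K] (c : K) :
    (RatFunc.X - RatFunc.C c : RatFunc K) ≠ 0 := by
  rw [← RatFunc.algebraMap_X, ← RatFunc.algebraMap_C, ← map_sub]
  exact RatFunc.algebraMap_ne_zero (Polynomial.X_sub_C_ne_zero c)

lemma coe_inv_X_sub_C' {K : Type*} [Field K] {c : K} (hc : c ≠ 0) :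
    (((RatFunc.X - RatFunc.C c)⁻¹ : RatFunc K) : LaurentSeries K)
      = -(HahnSeries.ofPowerSeries ℤ K (PowerSeries.invUnitsSub (Units.mk0 c hc))) := by
  rw [map_inv₀]
  refine inv_eq_of_mul_eq_one_right ?_
  rw [map_sub, RatFunc.coe_X, ratFunc_coe_C']
  have h := PowerSeries.invUnitsSub_mul_sub (R := K) (Units.mk0 c hc)
  have h2 := congrArg (HahnSeries.ofPowerSeries ℤ K) h
  rw [map_mul, map_one, map_sub, HahnSeries.ofPowerSeries_C, HahnSeries.ofPowerSeries_X] at h2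
  simp only [Units.val_mk0] at h2
  linear_combination h2

lemma coeff_inv_X_sub_C_neg' {K : Type*} [Field K] {c : K} (hc : c ≠ 0) {j : ℤ} (hj : j < 0) :
    (((RatFunc.X - RatFunc.C c)⁻¹ : RatFunc K) : LaurentSeries K).coeff j = 0 := by
  rw [coe_inv_X_sub_C' hc, HahnSeries.coeff_neg, coeff_ofPowerSeries_neg' _ hj, neg_zero]

lemma coeff_inv_X_sub_C_nonneg' {K : Type*} [Field K] {c : K} (hc : c ≠ 0) (m : ℕ) :
    (((RatFunc.X - RatFunc.C c)⁻¹ : RatFunc K) : LaurentSeries K).coeff (m : ℤ)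
      = -(c ^ (m + 1))⁻¹ := by
  rw [coe_inv_X_sub_C' hc, HahnSeries.coeff_neg, HahnSeries.ofPowerSeries_apply_coeff,
    PowerSeries.coeff_invUnitsSub, one_divp]
  norm_num

lemma mul_coeff_eq_zero_of' {K : Type*} [Field K] {a b : LaurentSeries K} {ca cb n : ℤ}
    (ha : ∀ i, i < ca → a.coeff i = 0) (hb : ∀ j, j < cb → b.coeff j = 0)
    (hn : n < ca + cb) : (a * b).coeff n = 0 := by
  rw [HahnSeries.coeff_mul]
  apply Finset.sum_eq_zero
  rintro ⟨i, j⟩ hij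
  rw [Finset.mem_addAntidiagonal] at hij
  obtain ⟨hi, hj, hsum⟩ := hij
  exfalso
  have h1 : a.coeff i ≠ 0 := hi
  have h2 : b.coeff j ≠ 0 := hj
  have h3 : ¬ i < ca := fun h => h1 (ha i h)
  have h4 : ¬ j < cb := fun h => h2 (hb j h)
  omega

lemma res0_zpow_div' {K : Type*} [Field K] {c : K} (hc : c ≠ 0) (n : ℤ) :
    ((RatFunc.X ^ n / (RatFunc.X - RatFunc.C c) : RatFunc K) : LaurentSeries K).coeff (-1)
      = if n < 0 then -(c ^ n) else 0 := by
  rw [div_eq_mul_inv, map_mul, coe_X_zpow']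
  rw [show (-1 : ℤ) = (-1 - n) + n by ring, HahnSeries.coeff_single_mul_add, one_mul]
  by_cases hn : n < 0
  · rw [if_pos hn]
    have hm : (-1 - n) = (((-1 - n).toNat : ℕ) : ℤ) := by omega
    rw [hm, coeff_inv_X_sub_C_nonneg' hc]
    have : c ^ n = (c ^ ((-1 - n).toNat + 1))⁻¹ := by
      rw [← zpow_natCast c ((-1 - n).toNat + 1), ← zpow_neg]
      congr 1
      omega
    rw [this]
  · rw [if_neg hn, coeff_inv_X_sub_C_neg' hc (by omega)]

/-! Lemmas about `ftilde` and `qinv`. -/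

lemma ftilde_algebraMap (p : Polynomial F) :
    ftilde F (algebraMap (Polynomial F) (RatFunc F) p) = gmap F p :=
  IsFractionRing.lift_algebraMap (gmap_injective F) p

lemma gmap_apply (p : Polynomial F) :
    gmap F p = algebraMap (Polynomial (RatFunc F)) (RatFunc (RatFunc F))
      (p.map (algebraMap F (RatFunc F))) := rfl

lemma ftilde_X : ftilde F RatFunc.X = RatFunc.X := by
  rw [← RatFunc.algebraMap_X (K := F), ftilde_algebraMap, gmap_apply, Polynomial.map_X,
    RatFunc.algebraMap_X]

lemma ftilde_C (a : F) : ftilde F (RatFunc.C a) = RatFunc.C (RatFunc.C a) := by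
  rw [← RatFunc.algebraMap_C (K := F) a, ftilde_algebraMap, gmap_apply, Polynomial.map_C,
    RatFunc.algebraMap_C, RatFunc.algebraMap_eq_C, RatFunc.algebraMap_C]

lemma qinv_algebraMap (p : Polynomial F) :
    qinv F (algebraMap (Polynomial F) (RatFunc F) p)
      = Polynomial.aeval (RatFunc.X (K := F))⁻¹ p := by
  rw [qinv, IsFractionRing.liftAlgHom_apply, IsFractionRing.lift_algebraMap]
  rfl

lemma qinv_X : qinv F RatFunc.X = (RatFunc.X)⁻¹ := by
  rw [← RatFunc.algebraMap_X (K := F), qinv_algebraMap, Polynomial.aeval_X,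
    RatFunc.algebraMap_X]

lemma qinv_C (a : F) : qinv F (RatFunc.C a) = RatFunc.C a := by
  rw [← RatFunc.algebraMap_eq_C]
  exact (qinv F).commutes a

lemma qinv_ftilde_comm (f : RatFunc F) :
    qinv (RatFunc F) (ftilde F f) = ftilde F (qinv F f) := by
  have h : ((qinv (RatFunc F)).toRingHom.comp (ftilde F))
      = (ftilde F).comp (qinv F).toRingHom := by
    apply IsLocalization.ringHom_ext (nonZeroDivisors (Polynomial F))
    apply Polynomial.ringHom_ext
    · intro a
      simp only [RingHom.comp_apply, RingHom.coe_comp, Function.comp_apply, AlgHom.toRingHom_eq_coe,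
        RingHom.coe_coe]
      rw [RatFunc.algebraMap_C, qinv_C, ftilde_C]
      exact qinv_C (RatFunc F) (RatFunc.C a)
    · simp only [RingHom.comp_apply, RingHom.coe_comp, Function.comp_apply, AlgHom.toRingHom_eq_coe,
        RingHom.coe_coe]
      rw [RatFunc.algebraMap_X, ftilde_X, qinv_X, qinv_X, map_inv₀, ftilde_X]
  have := DFunLike.congr_fun h f
  simpa using this

/-- Coefficientwise application of `RatFunc.C : F →+* F(q)`, as a ring hom on Laurent series. -/
def laurentMap : LaurentSeries F →+* LaurentSeries (RatFunc F) where
  toFun x := x.map (RatFunc.C (K := F))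
  map_zero' := by ext; simp
  map_one' := by
    ext n
    simp [HahnSeries.coeff_one, apply_ite (RatFunc.C (K := F))]
  map_add' x y := by ext n; simp
  map_mul' x y := by
    have e : ∀ z : LaurentSeries F,
        z.map (RatFunc.C (K := F)).toNonUnitalRingHom = z.map (RatFunc.C (K := F)) :=
      fun z => rfl
    have h := HahnSeries.map_mul (Γ := ℤ) (f := (RatFunc.C (K := F)).toNonUnitalRingHom)
      (x := x) (y := y)
    rw [e, e, e] at h
    exact h

lemma laurentMap_coeff (x : LaurentSeries F) (n : ℤ) :
    (laurentMap F x).coeff n = RatFunc.C (x.coeff n) := rfl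

lemma laurentMap_single (a : ℤ) (r : F) :
    laurentMap F (HahnSeries.single a r) = HahnSeries.single a (RatFunc.C r) := by
  ext n
  rw [laurentMap_coeff]
  by_cases h : n = a
  · subst h; simp [HahnSeries.coeff_single_same]
  · simp [HahnSeries.coeff_single_of_ne h]

open scoped RatFunc in
lemma coe_ftilde (f : RatFunc F) :
    ((ftilde F f : RatFunc (RatFunc F)) : LaurentSeries (RatFunc F))
      = laurentMap F (f : LaurentSeries F) := by
  have h : ((algebraMap (RatFunc (RatFunc F)) (LaurentSeries (RatFunc F))).comp (ftilde F))
      = (laurentMap F).comp (algebraMap (RatFunc F) (LaurentSeries F)) := by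
    apply IsLocalization.ringHom_ext (nonZeroDivisors (Polynomial F))
    apply Polynomial.ringHom_ext
    · intro a
      simp only [RingHom.comp_apply, AlgHom.toRingHom_eq_coe, RingHom.coe_coe]
      rw [RatFunc.algebraMap_C, ftilde_C]
      rw [show ((algebraMap (RatFunc (RatFunc F)) (LaurentSeries (RatFunc F))) (RatFunc.C (RatFunc.C a)))
            = ((RatFunc.C (RatFunc.C a) : RatFunc (RatFunc F)) : LaurentSeries (RatFunc F))
          from rfl]
      rw [show ((algebraMap (RatFunc F) (LaurentSeries F)) (RatFunc.C a))
            = ((RatFunc.C a : RatFunc F) : LaurentSeries F) from rfl]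
      rw [ratFunc_coe_C', ratFunc_coe_C', HahnSeries.C_apply, HahnSeries.C_apply,
        laurentMap_single]
    · simp only [RingHom.comp_apply, AlgHom.toRingHom_eq_coe, RingHom.coe_coe]
      rw [RatFunc.algebraMap_X, ftilde_X]
      rw [show ((algebraMap (RatFunc (RatFunc F)) (LaurentSeries (RatFunc F))) (RatFunc.X))
            = ((RatFunc.X : RatFunc (RatFunc F)) : LaurentSeries (RatFunc F)) from rfl]
      rw [show ((algebraMap (RatFunc F) (LaurentSeries F)) (RatFunc.X))
            = ((RatFunc.X : RatFunc F) : LaurentSeries F) from rfl]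
      rw [RatFunc.coe_X, RatFunc.coe_X, laurentMap_single]
      simp
  have := DFunLike.congr_fun h f
  simpa using this

lemma coeff_ftilde (f : RatFunc F) (n : ℤ) :
    ((ftilde F f : RatFunc (RatFunc F)) : LaurentSeries (RatFunc F)).coeff n
      = RatFunc.C (coeffL F n f) := by
  rw [coe_ftilde, laurentMap_coeff]
  rfl

/-! Lemmas about `res0` and `resInf`. -/

lemma res0_apply (h : RatFunc F) : res0 F h = ((h : LaurentSeries F)).coeff (-1) := rfl

lemma res0_add (h₁ h₂ : RatFunc F) : res0 F (h₁ + h₂) = res0 F h₁ + res0 F h₂ :=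
  map_add (coeffL F (-1)) _ _

lemma res0_neg (h : RatFunc F) : res0 F (-h) = -res0 F h :=
  map_neg (coeffL F (-1)) _

lemma res0_zero : res0 F 0 = 0 := map_zero (coeffL F (-1))

lemma res0_C_mul (a : F) (h : RatFunc F) : res0 F (RatFunc.C a * h) = a * res0 F h := by
  rw [res0_apply, res0_apply, map_mul, ratFunc_coe_C', HahnSeries.C_apply,
    HahnSeries.coeff_single_zero_mul]

lemma resInf_add (h₁ h₂ : RatFunc F) : resInf F (h₁ + h₂) = resInf F h₁ + resInf F h₂ := by
  unfold resInf
  rw [map_add, mul_add, res0_add]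
  ring

lemma resInf_zero : resInf F 0 = 0 := by
  unfold resInf
  rw [map_zero, mul_zero, res0_zero, neg_zero]

lemma resInf_C_mul (a : F) (h : RatFunc F) :
    resInf F (RatFunc.C a * h) = a * resInf F h := by
  unfold resInf
  rw [map_mul, qinv_C, mul_left_comm, res0_C_mul]
  ring

/-- The key partial-fraction identity used to compute residues at infinity. -/
lemma aux_ident {K : Type*} [Field K] {c : K} (hc : c ≠ 0) (u : RatFunc K) :
    (RatFunc.X : RatFunc K)⁻¹ ^ 2 * (u / ((RatFunc.X)⁻¹ - RatFunc.C c)) =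
      -(RatFunc.C c⁻¹ * ((RatFunc.X)⁻¹ * u / (RatFunc.X - RatFunc.C c⁻¹))) := by
  have hX : (RatFunc.X : RatFunc K) ≠ 0 := RatFunc.X_ne_zero
  have h1 : (RatFunc.X - RatFunc.C c⁻¹ : RatFunc K) ≠ 0 := X_sub_C_ne_zero' c⁻¹
  have hCc : (RatFunc.C c : RatFunc K) * RatFunc.C c⁻¹ = 1 := by
    rw [← map_mul, mul_inv_cancel₀ hc, map_one]
  have e1 : ((RatFunc.X : RatFunc K)⁻¹ - RatFunc.C c) * RatFunc.X
      = -(RatFunc.C c * (RatFunc.X - RatFunc.C c⁻¹)) := by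
    rw [sub_mul, inv_mul_cancel₀ hX]
    linear_combination -hCc
  have key : ((RatFunc.X : RatFunc K)⁻¹ - RatFunc.C c)⁻¹
      = -(RatFunc.C c⁻¹ * (RatFunc.X * (RatFunc.X - RatFunc.C c⁻¹)⁻¹)) := by
    refine inv_eq_of_mul_eq_one_right ?_
    calc ((RatFunc.X : RatFunc K)⁻¹ - RatFunc.C c)
          * -(RatFunc.C c⁻¹ * (RatFunc.X * (RatFunc.X - RatFunc.C c⁻¹)⁻¹))
        = (((RatFunc.X : RatFunc K)⁻¹ - RatFunc.C c) * RatFunc.X)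
            * -(RatFunc.C c⁻¹ * (RatFunc.X - RatFunc.C c⁻¹)⁻¹) := by ring
      _ = (RatFunc.C c * RatFunc.C c⁻¹)
            * ((RatFunc.X - RatFunc.C c⁻¹) * (RatFunc.X - RatFunc.C c⁻¹)⁻¹) := by
            rw [e1]; ring
      _ = 1 := by rw [hCc, mul_inv_cancel₀ h1, one_mul]
  rw [div_eq_mul_inv, div_eq_mul_inv, key]
  have e2 : ((RatFunc.X : RatFunc K)⁻¹) ^ 2 * RatFunc.X = (RatFunc.X : RatFunc K)⁻¹ := by
    rw [sq, mul_assoc, inv_mul_cancel₀ hX, mul_one]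
  calc ((RatFunc.X : RatFunc K)⁻¹) ^ 2
        * (u * -(RatFunc.C c⁻¹ * (RatFunc.X * (RatFunc.X - RatFunc.C c⁻¹)⁻¹)))
      = -(RatFunc.C c⁻¹ * ((((RatFunc.X : RatFunc K)⁻¹) ^ 2 * RatFunc.X * u)
          * (RatFunc.X - RatFunc.C c⁻¹)⁻¹)) := by ring
    _ = -(RatFunc.C c⁻¹ * ((RatFunc.X : RatFunc K)⁻¹ * u * (RatFunc.X - RatFunc.C c⁻¹)⁻¹)) := by
          rw [e2]

/-- Vanishing of `res0` on `K₋`. -/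
lemma kminus_res0 (m : RatFunc F) (hm : m ∈ KminusS F) :
    res0 (RatFunc F) (ftilde F m / (RatFunc.X - RatFunc.C (RatFunc.X (K := F)))) = 0 := by
  obtain ⟨h1, h2⟩ := hm
  rw [div_eq_mul_inv, res0_apply, map_mul]
  apply mul_coeff_eq_zero_of' (ca := 0) (cb := 0)
  · intro i hi
    rw [coeff_ftilde, h1 i hi, map_zero]
  · intro j hj
    exact coeff_inv_X_sub_C_neg' RatFunc.X_ne_zero hj
  · norm_num

/-- Vanishing of `resInf` on `K₋`. -/
lemma kminus_resInf (m : RatFunc F) (hm : m ∈ KminusS F) :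
    resInf (RatFunc F) (ftilde F m / (RatFunc.X - RatFunc.C (RatFunc.X (K := F)))) = 0 := by
  obtain ⟨h1, h2⟩ := hm
  have hq : (RatFunc.X (K := F)) ≠ 0 := RatFunc.X_ne_zero
  unfold resInf
  rw [map_div₀, qinv_ftilde_comm, map_sub, qinv_X,
    show qinv (RatFunc F) (RatFunc.C (RatFunc.X (K := F))) = RatFunc.C (RatFunc.X (K := F)) from
      qinv_C (RatFunc F) (RatFunc.X (K := F)),
    aux_ident hq, res0_neg, res0_C_mul, neg_neg]
  have hz : res0 (RatFunc F)
      ((RatFunc.X)⁻¹ * ftilde F (qinv F m) / (RatFunc.X - RatFunc.C (RatFunc.X (K := F))⁻¹))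
      = 0 := by
    rw [div_eq_mul_inv, res0_apply, map_mul, map_mul,
      show ((RatFunc.X : RatFunc (RatFunc F))⁻¹) = RatFunc.X ^ (-1 : ℤ) from
        (zpow_neg_one _).symm, coe_X_zpow']
    apply mul_coeff_eq_zero_of' (ca := 0) (cb := 0) (n := -1)
    · intro i hi
      rw [show i = (i + 1) + (-1) by ring, HahnSeries.coeff_single_mul_add, one_mul,
        coeff_ftilde, h2 (i + 1) (by omega), map_zero]
    · intro j hj
      exact coeff_inv_X_sub_C_neg' (inv_ne_zero hq) hj
    · norm_num
  rw [hz, mul_zero]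

/-- The residue formula for monomials `qⁿ`, `n ∈ ℤ`. -/
lemma monomial_case (n : ℤ) :
    (RatFunc.X ^ n : RatFunc F) =
      - res0 (RatFunc F) (ftilde F (RatFunc.X ^ n)
          / (RatFunc.X - RatFunc.C (RatFunc.X (K := F))))
      - resInf (RatFunc F) (ftilde F (RatFunc.X ^ n)
          / (RatFunc.X - RatFunc.C (RatFunc.X (K := F)))) := by
  have hq : (RatFunc.X (K := F)) ≠ 0 := RatFunc.X_ne_zero
  have hft : ftilde F (RatFunc.X ^ n) = RatFunc.X ^ n := by rw [map_zpow₀, ftilde_X]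
  rw [hft]
  have hres0 : res0 (RatFunc F) (RatFunc.X ^ n / (RatFunc.X - RatFunc.C (RatFunc.X (K := F))))
      = if n < 0 then -(RatFunc.X (K := F) ^ n) else 0 := by
    rw [res0_apply]
    exact res0_zpow_div' hq n
  have hresInf : resInf (RatFunc F)
      (RatFunc.X ^ n / (RatFunc.X - RatFunc.C (RatFunc.X (K := F))))
      = if n < 0 then 0 else -(RatFunc.X (K := F) ^ n) := by
    unfold resInf
    rw [map_div₀, map_zpow₀, qinv_X, map_sub, qinv_X,
      show qinv (RatFunc F) (RatFunc.C (RatFunc.X (K := F))) = RatFunc.C (RatFunc.X (K := F)) from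
        qinv_C (RatFunc F) (RatFunc.X (K := F)),
      aux_ident hq, res0_neg, res0_C_mul, neg_neg]
    have hXX : (RatFunc.X : RatFunc (RatFunc F))⁻¹ * ((RatFunc.X)⁻¹) ^ n
        = RatFunc.X ^ (-n - 1) := by
      rw [inv_zpow, ← zpow_neg, ← zpow_neg_one, ← zpow_add₀ (RatFunc.X_ne_zero (K := RatFunc F))]
      ring_nf
    rw [hXX]
    have := res0_zpow_div' (K := RatFunc F) (c := (RatFunc.X (K := F))⁻¹) (inv_ne_zero hq) (-n - 1)
    rw [res0_apply, this]
    by_cases hn : n < 0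
    · rw [if_pos hn, if_neg (by omega), mul_zero]
    · rw [if_neg hn, if_pos (by omega)]
      have h1 : ((RatFunc.X (K := F))⁻¹) ^ (-n - 1) = RatFunc.X (K := F) ^ (n + 1) := by
        rw [inv_zpow, ← zpow_neg]
        ring_nf
      rw [h1]
      have h2 : (RatFunc.X (K := F))⁻¹ * (RatFunc.X (K := F) ^ (n + 1))
          = RatFunc.X (K := F) ^ n := by
        rw [← zpow_neg_one, ← zpow_add₀ hq]
        ring_nf
      rw [mul_neg, h2]
  rw [hres0, hresInf]
  by_cases hn : n < 0
  · rw [if_pos hn, if_pos hn, neg_neg, sub_zero]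
  · rw [if_neg hn, if_neg hn, neg_zero, zero_sub, neg_neg]

end ResidueAux

/-- Cauchy residue formula for the projection `[·]₊`:
if `p` is the `K₊`-component of `f` (i.e. `p ∈ K₊` and `f − p ∈ K₋`), then
`p = −Res_{w=0}( f̃(w)/(w−q) dw ) − Res_{w=∞}( f̃(w)/(w−q) dw )`. -/
theorem plusPart_eq_residue (f p : RatFunc F)
    (hp : p ∈ KplusS F) (hfp : f - p ∈ KminusS F) :
    p = - res0 (RatFunc F) (ftilde F f / (RatFunc.X - RatFunc.C (RatFunc.X (K := F))))
        - resInf (RatFunc F) (ftilde F f / (RatFunc.X - RatFunc.C (RatFunc.X (K := F)))) := by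
  set D : RatFunc (RatFunc F) := RatFunc.X - RatFunc.C (RatFunc.X (K := F)) with hD
  set R : RatFunc F → RatFunc F := fun g =>
    - res0 (RatFunc F) (ftilde F g / D) - resInf (RatFunc F) (ftilde F g / D) with hR
  have hadd : ∀ x y : RatFunc F, R (x + y) = R x + R y := by
    intro x y
    simp only [hR, map_add, add_div, res0_add, resInf_add]
    ring
  have hsmul : ∀ (c : F) (x : RatFunc F), R (c • x) = c • R x := by
    intro c x
    simp only [hR, RatFunc.smul_eq_C_mul]
    rw [map_mul, ftilde_C, mul_div_assoc, res0_C_mul, resInf_C_mul]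
    ring
  have hzero : R 0 = 0 := by
    simp only [hR, map_zero, zero_div, res0_zero, resInf_zero, neg_zero, sub_zero]
  have hplus : ∀ g ∈ KplusS F, g = R g := by
    intro g hg
    induction hg using Submodule.span_induction with
    | mem x hx =>
        obtain ⟨n, rfl⟩ := hx
        simpa only [hR, hD] using monomial_case F n
    | zero => rw [hzero]
    | add x y _ _ hx hy => rw [hadd, ← hx, ← hy]
    | smul c x _ hx => rw [hsmul, ← hx]
  have hminus : R (f - p) = 0 := by
    simp only [hR, hD]
    rw [kminus_res0 F _ hfp, kminus_resInf F _ hfp]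
    ring
  have hsplit : R f = R p + R (f - p) := by
    rw [← hadd]
    congr 1
    ring
  have : R f = p := by rw [hsplit, hminus, add_zero, ← hplus p hp]
  rw [← this]

end
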